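/- If ρ ∈ R^d, M ∈ R^{d×d} with M ≠ 0, and ρ + Mᵀw ∈ B_W for every w ∈ B_W, then ||ρ||₂ < W. -/

import Mathlib

theorem ball_invariance_rho_lt
    (d : ℕ) (W : ℝ) (hW : 0 < W)
    (ρ : EuclideanSpace ℝ (Fin d))
    (A : EuclideanSpace ℝ (Fin d) →L[ℝ] EuclideanSpace ℝ (Fin d))
    (hA : A ≠ 0)
    (hinv : ∀ w : EuclideanSpace ℝ (Fin d), ‖w‖ ≤ W → ‖ρ + A w‖ ≤ W) :
    ‖ρ‖ < W := by
  have hle : ‖ρ‖ ≤ W := by simpa using hinv 0 (by simp [le_of_lt hW])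
  rcases lt_or_eq_of_le hle with h | h
  · exact h
  · exfalso
    apply hA
    ext w
    simp only [ContinuousLinearMap.zero_apply]
    -- show A w = 0 for all w; first for w in the ball
    have key : ∀ u : EuclideanSpace ℝ (Fin d), ‖u‖ ≤ W → A u = 0 := by
      intro u hu
      have h1 := hinv u hu
      have h2 := hinv (-u) (by simpa using hu)
      have hpar : ‖ρ + A u‖ ^ 2 + ‖ρ - A u‖ ^ 2 = 2 * ‖ρ‖ ^ 2 + 2 * ‖A u‖ ^ 2 := by
        have := norm_add_sq_real ρ (A u)
        have := norm_sub_sq_real ρ (A u)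
        nlinarith [norm_add_sq_real ρ (A u), norm_sub_sq_real ρ (A u)]
      have h2' : ‖ρ - A u‖ ≤ W := by
        have : ρ + A (-u) = ρ - A u := by simp [sub_eq_add_neg]
        rwa [this] at h2
      have hAu : ‖A u‖ ^ 2 ≤ 0 := by
        nlinarith [norm_nonneg (ρ + A u), norm_nonneg (ρ - A u)]
      have : ‖A u‖ = 0 := by nlinarith [norm_nonneg (A u)]
      exact norm_eq_zero.mp this
    by_cases hw : w = 0
    · simp [hw]
    · have hnw : (0:ℝ) < ‖w‖ := norm_pos_iff.mpr hw
      have := key ((W / ‖w‖) • w) (by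
        rw [norm_smul, Real.norm_eq_abs, abs_of_pos (div_pos hW hnw)]
        field_simp
        exact le_rfl)
      rw [map_smul] at this
      have hne : (W / ‖w‖) ≠ 0 := ne_of_gt (div_pos hW hnw)
      simp [(smul_eq_zero.mp this).resolve_left hne]
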